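/- arXiv:1505.07945 — 3 statements merged into one kernel-verified Lean document; each statement's English description precedes it below -/
import Mathlib

section
/- Every path condition can be reduced to a simple path condition: for every path condition π over a set R of relationship labels there exists a simple path condition π' such that π ≡ π', i.e. for every system graph G = (V,E) and all u, v ∈ V, G,u,v ⊨ π iff G,u,v ⊨ π'. -/
/-- Path conditions over a set `R` of relationship labels. -/
inductive PathCond (R : Type) : Type where
  | diamond : PathCond R
  | rel : R → PathCond R
  | comp : PathCond R → PathCond R → PathCond R
  | plus : PathCond R → PathCond R
  | rev : PathCond R → PathCond R

/-- The least relation `S` containing `r` and closed under: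
if `r u w` and `(w,v) ∈ S` then `(u,v) ∈ S`. -/
inductive PlusClosure {V : Type} (r : V → V → Prop) : V → V → Prop where
  | base {u v : V} : r u v → PlusClosure r u v
  | head {u w v : V} : r u w → PlusClosure r w v → PlusClosure r u v

/-- Satisfaction of a path condition in a system graph `G = (V, E)`,
where `E ⊆ V × V × R`. -/
def Sat {R V : Type} (E : Set (V × V × R)) : PathCond R → V → V → Prop
  | .diamond => fun u v => u = v
  | .rel r => fun u v => (u, v, r) ∈ E
  | .comp π π' => fun u v => ∃ w, Sat E π u w ∧ Sat E π' w v
  | .plus π => PlusClosure (Sat E π)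
  | .rev π => fun u v => Sat E π v u

/-- Equivalence of path conditions: same satisfaction in every system graph. -/
def PCEquiv {R : Type} (π π' : PathCond R) : Prop :=
  ∀ (V : Type) (E : Set (V × V × R)) (u v : V), Sat E π u v ↔ Sat E π' u v

/-- Simple path conditions: `⋄`, `r` and `r̄` (for `r ∈ R`) are simple, and if
`π ≠ ⋄` and `π' ≠ ⋄` are simple then so are `π ∘ π'` and `π⁺`.  (In particular,
reversal is applied only directly to elements of `R`.) -/
inductive SimplePC {R : Type} : PathCond R → Prop where
  | diamond : SimplePC PathCond.diamond
  | rel (r : R) : SimplePC (PathCond.rel r)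
  | revRel (r : R) : SimplePC (PathCond.rev (PathCond.rel r))
  | comp {π π' : PathCond R} : SimplePC π → SimplePC π' →
      π ≠ PathCond.diamond → π' ≠ PathCond.diamond → SimplePC (PathCond.comp π π')
  | plus {π : PathCond R} : SimplePC π → π ≠ PathCond.diamond →
      SimplePC (PathCond.plus π)

section Aux
variable {R : Type}

lemma plusMono {V : Type} {r s : V → V → Prop} (h : ∀ a b, r a b → s a b)
    {u v : V} (hp : PlusClosure r u v) : PlusClosure s u v := by
  induction hp with
  | base hb => exact .base (h _ _ hb)
  | head hb _ ih => exact .head (h _ _ hb) ih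

lemma plusTail {V : Type} {r : V → V → Prop} {u v w : V}
    (hp : PlusClosure r u v) (h : r v w) : PlusClosure r u w := by
  induction hp generalizing w with
  | base hb => exact .head hb (.base h)
  | head hb _ ih => exact .head hb (ih h)

lemma plusFlip {V : Type} {r : V → V → Prop} {u v : V}
    (hp : PlusClosure r u v) : PlusClosure (fun a b => r b a) v u := by
  induction hp with
  | base hb => exact .base hb
  | head hb _ ih => exact plusTail ih hb

lemma pcTrans {a b c : PathCond R} (h1 : PCEquiv a b) (h2 : PCEquiv b c) :
    PCEquiv a c := fun V E u v => (h1 V E u v).trans (h2 V E u v)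

lemma compCongr {a b a' b' : PathCond R} (h1 : PCEquiv a a') (h2 : PCEquiv b b') :
    PCEquiv (.comp a b) (.comp a' b') := by
  intro V E u v
  simp only [Sat]
  exact exists_congr fun w => and_congr (h1 V E u w) (h2 V E w v)

lemma plusCongr {a a' : PathCond R} (h1 : PCEquiv a a') :
    PCEquiv (.plus a) (.plus a') := by
  intro V E u v
  constructor
  · exact plusMono fun x y h => (h1 V E x y).1 h
  · exact plusMono fun x y h => (h1 V E x y).2 h

lemma smartComp (σ σ' : PathCond R) (hs : SimplePC σ) (hs' : SimplePC σ') :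
    ∃ τ, SimplePC τ ∧ PCEquiv (.comp σ σ') τ := by
  by_cases h : σ = PathCond.diamond
  · subst h
    refine ⟨σ', hs', fun V E u v => ?_⟩
    simp only [Sat]
    constructor
    · rintro ⟨w, rfl, hw⟩; exact hw
    · exact fun hw => ⟨u, rfl, hw⟩
  · by_cases h' : σ' = PathCond.diamond
    · subst h'
      refine ⟨σ, hs, fun V E u v => ?_⟩
      simp only [Sat]
      constructor
      · rintro ⟨w, hw, rfl⟩; exact hw
      · exact fun hw => ⟨v, hw, rfl⟩
    · exact ⟨.comp σ σ', .comp hs hs' h h', fun V E u v => Iff.rfl⟩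

lemma smartPlus (σ : PathCond R) (hs : SimplePC σ) :
    ∃ τ, SimplePC τ ∧ PCEquiv (.plus σ) τ := by
  by_cases h : σ = PathCond.diamond
  · subst h
    refine ⟨.diamond, .diamond, fun V E u v => ?_⟩
    simp only [Sat]
    constructor
    · intro hp
      induction hp with
      | base hb => exact hb
      | head hb _ ih => exact hb.trans ih
    · exact fun hb => .base hb
  · exact ⟨.plus σ, .plus hs h, fun V E u v => Iff.rfl⟩

lemma exists_simple_both {R : Type} (π : PathCond R) :
    (∃ π', SimplePC π' ∧ PCEquiv π π') ∧
    (∃ π', SimplePC π' ∧ PCEquiv (.rev π) π') := by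
  induction π with
  | diamond =>
    refine ⟨⟨.diamond, .diamond, fun _ _ _ _ => Iff.rfl⟩,
      ⟨.diamond, .diamond, fun V E u v => ?_⟩⟩
    simp only [Sat]; exact eq_comm
  | rel r =>
    exact ⟨⟨.rel r, .rel r, fun _ _ _ _ => Iff.rfl⟩,
      ⟨.rev (.rel r), .revRel r, fun _ _ _ _ => Iff.rfl⟩⟩
  | comp a b iha ihb =>
    obtain ⟨⟨σa, hsa, hea⟩, ⟨τa, hta, hra⟩⟩ := iha
    obtain ⟨⟨σb, hsb, heb⟩, ⟨τb, htb, hrb⟩⟩ := ihb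
    constructor
    · obtain ⟨τ, ht, he⟩ := smartComp σa σb hsa hsb
      exact ⟨τ, ht, pcTrans (compCongr hea heb) he⟩
    · obtain ⟨τ, ht, he⟩ := smartComp τb τa htb hta
      refine ⟨τ, ht, pcTrans ?_ he⟩
      intro V E u v
      have := compCongr hrb hra V E u v
      refine Iff.trans ?_ this
      simp only [Sat]
      constructor
      · rintro ⟨w, h1, h2⟩; exact ⟨w, h2, h1⟩
      · rintro ⟨w, h1, h2⟩; exact ⟨w, h2, h1⟩
  | plus a iha =>
    obtain ⟨⟨σa, hsa, hea⟩, ⟨τa, hta, hra⟩⟩ := iha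
    constructor
    · obtain ⟨τ, ht, he⟩ := smartPlus σa hsa
      exact ⟨τ, ht, pcTrans (plusCongr hea) he⟩
    · obtain ⟨τ, ht, he⟩ := smartPlus τa hta
      refine ⟨τ, ht, pcTrans ?_ he⟩
      refine pcTrans ?_ (plusCongr hra)
      intro V E u v
      show PlusClosure (Sat E a) v u ↔ PlusClosure (fun x y => Sat E a y x) u v
      exact ⟨plusFlip, fun h => plusFlip h⟩
    | rev a iha =>
    obtain ⟨⟨σa, hsa, hea⟩, ⟨τa, hta, hra⟩⟩ := iha
    refine ⟨⟨τa, hta, hra⟩, ⟨σa, hsa, fun V E u v => hea V E u v⟩⟩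

end Aux

/-- every path condition is equivalent to a simple path condition. -/
theorem exists_simple_equiv {R : Type} (π : PathCond R) :
    ∃ π' : PathCond R, SimplePC π' ∧ PCEquiv π π' :=
  (exists_simple_both π).1
end

section
/- For every simple path condition π over R in which ⋄ does not occur, the recursively constructed ε-free NFA M_π accepts exactly the word language of π: L(M_π) = L(π). -/
/-- ⋄-free simple path conditions over an alphabet `A` of atoms: built from
atoms using concatenation `∘` and repetition `⁺`.  (For path conditions over a
label set `R`, take `A = R ⊕ R`, i.e. `Σ = R ∪ {r̄ : r ∈ R}`.) -/
inductive SPC (A : Type) : Type where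
  | atom : A → SPC A
  | comp : SPC A → SPC A → SPC A
  | plus : SPC A → SPC A

/-- An NFA with a single start state `s` and a single accepting state `f`;
states are natural numbers, `Q` is the state set and `δ ⊆ Q × Q × A` the
transition relation. -/
structure SNFA (A : Type) : Type where
  Q : Set ℕ
  δ : Set (ℕ × ℕ × A)
  s : ℕ
  f : ℕ

/-- Rename the states of an NFA by adding `n` (used to obtain disjoint copies). -/
def SNFA.shift {A : Type} (n : ℕ) (M : SNFA A) : SNFA A :=
  ⟨(fun q => q + n) '' M.Q,
   (fun t => (t.1 + n, t.2.1 + n, t.2.2)) '' M.δ,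
   M.s + n, M.f + n⟩

/-- `AcceptsFrom δ q w q'`: the word `w` can take the automaton from state `q`
to state `q'` along transitions in `δ`. -/
def AcceptsFrom {A : Type} (δ : Set (ℕ × ℕ × A)) : ℕ → List A → ℕ → Prop
  | q, [], q' => q = q'
  | q, σ :: w, q' => ∃ p, (q, p, σ) ∈ δ ∧ AcceptsFrom δ p w q'

/-- The language accepted by an `SNFA`. -/
def SNFA.lang {A : Type} (M : SNFA A) : Set (List A) :=
  {w | AcceptsFrom M.δ M.s w M.f}

/-- The word language `L(π)` of a ⋄-free simple path condition:
`L(σ) = {σ}`, `L(π ∘ φ) = L(π)L(φ)`, `L(π⁺) = ⋃_{n ≥ 1} L(π)ⁿ`. -/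
def SPC.lang {A : Type} : SPC A → Set (List A)
  | .atom σ => {[σ]}
  | .comp π φ => {w | ∃ x ∈ SPC.lang π, ∃ y ∈ SPC.lang φ, w = x ++ y}
  | .plus π => {w | ∃ l : List (List A), l ≠ [] ∧ (∀ x ∈ l, x ∈ SPC.lang π) ∧ w = l.flatten}

/-- The recursive ε-free NFA construction `M_π` (paired with an upper bound on
the states used, to obtain disjoint state sets for concatenation):
* for an atom `σ`, states `{s, f}` with the single transition `(s, f, σ)`;
* for `π ∘ φ` (with the states of `M_φ` shifted to be disjoint from those of
  `M_π`): states `Q_π ∪ (Q_φ \ {s_φ})`, start `s_π`, accepting state `f_φ`,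
  transitions `δ_π`, together with every transition of `δ_φ` whose source is
  not `s_φ`, together with `(f_π, q, σ)` for every `(s_φ, q, σ) ∈ δ_φ`;
* for `π⁺`: the automaton `M_π` together with a transition `(f_π, q, σ)` for
  every initial transition `(s_π, q, σ) ∈ δ_π` (there is a unique such
  transition, of the form `(s, q, σ)` where `π = σ ∘ π'`). -/
def buildF {A : Type} : SPC A → SNFA A × ℕ
  | .atom σ => (⟨{0, 1}, {(0, 1, σ)}, 0, 1⟩, 2)
  | .comp π φ =>
      let P := buildF π
      let Q := buildF φ
      let M₂ := Q.1.shift P.2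
      (⟨P.1.Q ∪ (M₂.Q \ {M₂.s}),
        P.1.δ ∪ {t ∈ M₂.δ | t.1 ≠ M₂.s} ∪
          (fun t => (P.1.f, t.2.1, t.2.2)) '' {t ∈ M₂.δ | t.1 = M₂.s},
        P.1.s, M₂.f⟩, P.2 + Q.2)
  | .plus π =>
      let P := buildF π
      (⟨P.1.Q,
        P.1.δ ∪ (fun t => (P.1.f, t.2.1, t.2.2)) '' {t ∈ P.1.δ | t.1 = P.1.s},
        P.1.s, P.1.f⟩, P.2)
section Aux

variable {A : Type}

lemma acceptsFrom_nil {δ : Set (ℕ × ℕ × A)} {p q : ℕ} :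
    AcceptsFrom δ p [] q ↔ p = q := Iff.rfl

lemma acceptsFrom_cons {δ : Set (ℕ × ℕ × A)} {p q : ℕ} {σ : A} {w : List A} :
    AcceptsFrom δ p (σ :: w) q ↔ ∃ r, (p, r, σ) ∈ δ ∧ AcceptsFrom δ r w q := Iff.rfl

lemma acceptsFrom_mono {δ δ' : Set (ℕ × ℕ × A)} (h : δ ⊆ δ') :
    ∀ {w : List A} {p q : ℕ}, AcceptsFrom δ p w q → AcceptsFrom δ' p w q := by
  intro w
  induction w with
  | nil => intro p q hh; exact hh
  | cons σ w ih =>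
    rintro p q ⟨r, hr, hrest⟩
    exact ⟨r, h hr, ih hrest⟩

lemma acceptsFrom_append {δ : Set (ℕ × ℕ × A)} :
    ∀ {x y : List A} {p q r : ℕ}, AcceptsFrom δ p x q → AcceptsFrom δ q y r →
      AcceptsFrom δ p (x ++ y) r := by
  intro x
  induction x with
  | nil =>
    intro y p q r h1 h2
    have : p = q := h1
    subst this; exact h2
  | cons σ x ih =>
    rintro y p q r ⟨t, ht, hrest⟩ h2
    exact ⟨t, ht, ih hrest h2⟩

lemma acceptsFrom_shift {δ : Set (ℕ × ℕ × A)} {n : ℕ} :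
    ∀ {w : List A} {p q : ℕ},
      AcceptsFrom ((fun t => (t.1 + n, t.2.1 + n, t.2.2)) '' δ) (p + n) w (q + n)
        ↔ AcceptsFrom δ p w q := by
  intro w
  induction w with
  | nil =>
    intro p q
    simp [acceptsFrom_nil]
  | cons σ w ih =>
    intro p q
    constructor
    · rintro ⟨r, ⟨⟨a, b, τ⟩, hab, heq⟩, hrest⟩
      simp only [Prod.mk.injEq] at heq
      obtain ⟨h1, h2, h3⟩ := heq
      have ha : a = p := by omega
      subst ha h3
      subst h2
      exact ⟨b, hab, ih.mp hrest⟩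
    · rintro ⟨r, hr, hrest⟩
      exact ⟨r + n, ⟨(p, r, σ), hr, rfl⟩, ih.mpr hrest⟩

lemma spc_lang_ne (π : SPC A) : ∀ w ∈ π.lang, w ≠ [] := by
  induction π with
  | atom σ => rintro w hw; simp [SPC.lang] at hw; subst hw; simp
  | comp π φ ih1 ih2 =>
    rintro w ⟨x, hx, y, hy, rfl⟩
    have := ih1 x hx
    simp [this]
  | plus π ih =>
    rintro w ⟨l, hl, hall, rfl⟩
    cases l with
    | nil => exact absurd rfl hl
    | cons h t =>
      have := ih h (hall h (by simp))
      simp [this]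

end Aux
section Inv2
variable {A : Type}

/-- Invariant of the construction. -/
def BInv (M : SNFA A) (n : ℕ) : Prop :=
  M.s < n ∧ M.f < n ∧ M.s ≠ M.f ∧ ∀ t ∈ M.δ, t.1 < n ∧ t.2.1 < n ∧ t.2.1 ≠ M.s

lemma binv_shift {M : SNFA A} {m n : ℕ} (h : BInv M m) :
    BInv (M.shift n) (m + n) ∧ n ≤ (M.shift n).s ∧ n ≤ (M.shift n).f ∧
      ∀ t ∈ (M.shift n).δ, n ≤ t.1 ∧ n ≤ t.2.1 := by
  obtain ⟨hs, hf, hsf, hδ⟩ := h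
  have hmem : ∀ t ∈ (M.shift n).δ, ∃ a b τ, (a, b, τ) ∈ M.δ ∧ t = (a + n, b + n, τ) := by
    rintro t ⟨⟨a, b, τ⟩, hu, rfl⟩
    exact ⟨a, b, τ, hu, rfl⟩
  refine ⟨⟨by simp [SNFA.shift]; omega, by simp [SNFA.shift]; omega,
    by simp [SNFA.shift]; omega, ?_⟩, by simp [SNFA.shift], by simp [SNFA.shift], ?_⟩
  · intro t ht
    obtain ⟨a, b, τ, hu, rfl⟩ := hmem t ht
    have := hδ (a, b, τ) hu
    simp only [SNFA.shift] at this ⊢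
    refine ⟨by omega, by omega, by omega⟩
  · intro t ht
    obtain ⟨a, b, τ, hu, rfl⟩ := hmem t ht
    exact ⟨by simp, by simp⟩

lemma binv_buildF (π : SPC A) : BInv (buildF π).1 (buildF π).2 := by
  induction π with
  | atom σ =>
    refine ⟨?_, ?_, ?_, ?_⟩ <;> dsimp only [buildF]
    · norm_num
    · norm_num
    · norm_num
    · rintro ⟨a, b, τ⟩ ht
      simp only [Set.mem_singleton_iff, Prod.mk.injEq] at ht
      obtain ⟨h1, h2, _⟩ := ht
      subst h1; subst h2
      norm_num
  | comp π φ ih1 ih2 =>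
    obtain ⟨hs1, hf1, hsf1, hδ1⟩ := ih1
    obtain ⟨⟨hs2, hf2, hsf2, hδ2⟩, hsl, hfl, hδl⟩ :=
      binv_shift (n := (buildF π).2) ih2
    refine ⟨?_, ?_, ?_, ?_⟩ <;> dsimp only [buildF]
    · omega
    · omega
    · omega
    · rintro ⟨a, b, τ⟩ ht
      rcases ht with (ht | ⟨ht, hne⟩) | ⟨⟨x, y, υ⟩, ⟨hu, heq⟩, huv⟩
      · have := hδ1 _ ht
        exact ⟨by omega, by omega, this.2.2⟩
      · have h1 := hδ2 _ ht
        have h2 := hδl _ ht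
        simp only at h1 h2 ⊢
        exact ⟨by omega, by omega, by omega⟩
      · have h1 := hδ2 _ hu
        have h2 := hδl _ hu
        simp only [Prod.mk.injEq] at huv h1 h2 heq ⊢
        obtain ⟨e1, e2, e3⟩ := huv
        refine ⟨by omega, by omega, by omega⟩
  | plus π ih =>
    obtain ⟨hs, hf, hsf, hδ⟩ := ih
    refine ⟨?_, ?_, ?_, ?_⟩ <;> dsimp only [buildF]
    · omega
    · omega
    · omega
    · rintro ⟨a, b, τ⟩ ht
      rcases ht with ht | ⟨⟨x, y, υ⟩, ⟨hu, heq⟩, huv⟩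
      · exact hδ _ ht
      · have h1 := hδ _ hu
        simp only [Prod.mk.injEq] at huv h1 heq ⊢
        obtain ⟨e1, e2, e3⟩ := huv
        refine ⟨by omega, by omega, by omega⟩

end Inv2
section Runs
variable {A : Type}

section Comp
variable {δ₁ δ₂ : Set (ℕ × ℕ × A)} {f₁ s₂ f₂ n₁ : ℕ}

/-- Runs in the right part of the concatenation automaton. -/
lemma comp_right
    (h1 : ∀ t ∈ δ₁, t.1 < n₁)
    (hf1 : f₁ < n₁)
    (h2 : ∀ t ∈ δ₂, n₁ ≤ t.1 ∧ n₁ ≤ t.2.1 ∧ t.2.1 ≠ s₂) :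
    ∀ (w : List A) {r : ℕ}, n₁ ≤ r → r ≠ s₂ →
      (AcceptsFrom (δ₁ ∪ {t ∈ δ₂ | t.1 ≠ s₂} ∪
          (fun t => (f₁, t.2.1, t.2.2)) '' {t ∈ δ₂ | t.1 = s₂}) r w f₂
        ↔ AcceptsFrom δ₂ r w f₂) := by
  intro w
  induction w with
  | nil => intro r _ _; exact Iff.rfl
  | cons σ w ih =>
    intro r hr hrs
    constructor
    · rintro ⟨t, ht, hrest⟩
      rcases ht with (ht | ⟨ht, -⟩) | ⟨⟨x, y, υ⟩, ⟨hu, -⟩, huv⟩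
      · exact absurd (h1 _ ht) (by omega)
      · have := h2 _ ht
        exact ⟨t, ht, (ih this.2.1 this.2.2).mp hrest⟩
      · simp only [Prod.mk.injEq] at huv
        omega
    · rintro ⟨t, ht, hrest⟩
      have := h2 _ ht
      exact ⟨t, Or.inl (Or.inr ⟨ht, hrs⟩), (ih this.2.1 this.2.2).mpr hrest⟩

/-- Splitting a run of the concatenation automaton from the left part. -/
lemma comp_left
    (h1 : ∀ t ∈ δ₁, t.1 < n₁ ∧ t.2.1 < n₁)
    (hf1 : f₁ < n₁) (hf2 : n₁ ≤ f₂)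
    (h2 : ∀ t ∈ δ₂, n₁ ≤ t.1 ∧ n₁ ≤ t.2.1 ∧ t.2.1 ≠ s₂) :
    ∀ (w : List A) {p : ℕ}, p < n₁ →
      AcceptsFrom (δ₁ ∪ {t ∈ δ₂ | t.1 ≠ s₂} ∪
          (fun t => (f₁, t.2.1, t.2.2)) '' {t ∈ δ₂ | t.1 = s₂}) p w f₂ →
      ∃ x σ y r, w = x ++ σ :: y ∧ AcceptsFrom δ₁ p x f₁ ∧
        (s₂, r, σ) ∈ δ₂ ∧ AcceptsFrom δ₂ r y f₂ := by
  intro w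
  induction w with
  | nil =>
    intro p hp hacc
    have : p = f₂ := hacc
    omega
  | cons σ w ih =>
    rintro p hp ⟨t, ht, hrest⟩
    rcases ht with (ht | ⟨ht, -⟩) | ⟨⟨x, y, υ⟩, ⟨hu, hx⟩, huv⟩
    · obtain ⟨x, τ, y, r, rfl, hx1, hx2, hx3⟩ := ih (h1 _ ht).2 hrest
      exact ⟨σ :: x, τ, y, r, rfl, ⟨t, ht, hx1⟩, hx2, hx3⟩
    · exact absurd (h2 _ ht).1 (by omega)
    · simp only [Prod.mk.injEq] at huv
      simp only at hx
      obtain ⟨e1, e2, e3⟩ := huv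
      rw [hx, e2, e3] at hu
      have hy := h2 _ hu
      simp only at hy
      refine ⟨[], σ, w, t, rfl, e1.symm, hu, ?_⟩
      exact (comp_right (fun u hu' => (h1 u hu').1) hf1 h2 w
        (by omega) hy.2.2).mp hrest

end Comp

section Plus
variable {δ : Set (ℕ × ℕ × A)} {s f : ℕ}

lemma plus_fwd :
    ∀ (w : List A) {p : ℕ},
      AcceptsFrom (δ ∪ (fun t => (f, t.2.1, t.2.2)) '' {t ∈ δ | t.1 = s}) p w f →
      ∃ x l, w = x ++ List.flatten l ∧ AcceptsFrom δ p x f ∧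
        ∀ y ∈ l, AcceptsFrom δ s y f := by
  intro w
  induction w with
  | nil =>
    intro p hacc
    exact ⟨[], [], rfl, hacc, by simp⟩
  | cons σ w ih =>
    rintro p ⟨t, ht, hrest⟩
    obtain ⟨x, l, rfl, hx, hl⟩ := ih hrest
    rcases ht with ht | ⟨⟨a, b, τ⟩, ⟨hu, ha⟩, huv⟩
    · exact ⟨σ :: x, l, rfl, ⟨t, ht, hx⟩, hl⟩
    · simp only [Prod.mk.injEq] at huv ha
      obtain ⟨e1, e2, e3⟩ := huv
      refine ⟨[], (σ :: x) :: l, by simp, e1.symm, ?_⟩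
      intro y hy
      rcases List.mem_cons.mp hy with rfl | hy
      · refine ⟨t, ?_, hx⟩
        rw [← e2, ← e3, ← ha]
        exact hu
      · exact hl y hy

lemma plus_restart (hsf : s ≠ f) :
    ∀ {z : List A}, z ≠ [] →
      AcceptsFrom (δ ∪ (fun t => (f, t.2.1, t.2.2)) '' {t ∈ δ | t.1 = s}) s z f →
      AcceptsFrom (δ ∪ (fun t => (f, t.2.1, t.2.2)) '' {t ∈ δ | t.1 = s}) f z f := by
  rintro (_ | ⟨σ, z⟩) hz hacc
  · exact absurd rfl hz
  · obtain ⟨t, ht, hrest⟩ := hacc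
    rcases ht with ht | ⟨⟨a, b, τ⟩, ⟨-, ha⟩, huv⟩
    · exact ⟨t, Or.inr ⟨(s, t, σ), ⟨ht, rfl⟩, rfl⟩, hrest⟩
    · simp only [Prod.mk.injEq] at huv ha
      omega

lemma plus_bwd (hsf : s ≠ f) :
    ∀ (l : List (List A)), l ≠ [] →
      (∀ y ∈ l, AcceptsFrom δ s y f ∧ y ≠ []) →
      AcceptsFrom (δ ∪ (fun t => (f, t.2.1, t.2.2)) '' {t ∈ δ | t.1 = s}) s
        (List.flatten l) f := by
  intro l
  induction l with
  | nil => intro h _; exact absurd rfl h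
  | cons y l ih =>
    intro _ hall
    have hy := hall y (by simp)
    have hy' : AcceptsFrom (δ ∪ (fun t => (f, t.2.1, t.2.2)) '' {t ∈ δ | t.1 = s}) s y f :=
      acceptsFrom_mono Set.subset_union_left hy.1
    rcases eq_or_ne l [] with rfl | hl
    · simpa using hy'
    · have hrest := ih hl (fun z hz => hall z (by simp [hz]))
      have hne : List.flatten l ≠ [] := by
        cases l with
        | nil => exact absurd rfl hl
        | cons z l =>
          have := (hall z (by simp)).2
          simp [this]
      have := plus_restart hsf hne hrest
      simpa using acceptsFrom_append hy' this

end Plus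
end Runs
/-- for every ⋄-free simple path condition `π` over the alphabet
`Σ = R ∪ {r̄ : r ∈ R}`, the ε-free NFA `M_π` accepts exactly the word language
of `π`: `L(M_π) = L(π)`. -/
theorem buildF_lang {R : Type} (π : SPC (R ⊕ R)) :
    (buildF π).1.lang = π.lang := by
  induction π with
  | atom σ =>
    ext w
    simp only [buildF, SNFA.lang, SPC.lang, Set.mem_setOf_eq, Set.mem_singleton_iff]
    constructor
    · intro h
      match w, h with
      | [], h => exact absurd (acceptsFrom_nil.mp h) (by omega)
      | τ :: w, ⟨r, hr, hrest⟩ =>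
        simp only [Set.mem_singleton_iff, Prod.mk.injEq] at hr
        obtain ⟨-, h2, h3⟩ := hr
        subst h2; subst h3
        match w, hrest with
        | [], _ => rfl
        | υ :: w, ⟨r', hr', _⟩ =>
          simp only [Set.mem_singleton_iff, Prod.mk.injEq] at hr'
          omega
    · rintro rfl
      exact ⟨1, rfl, rfl⟩
  | comp π φ ih1 ih2 =>
    obtain ⟨hs1, hf1, hsf1, hδ1⟩ := binv_buildF π
    obtain ⟨⟨hs2, hf2, hsf2, hδ2⟩, hsl, hfl, hδl⟩ :=
      binv_shift (n := (buildF π).2) (binv_buildF φ)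
    have h1' : ∀ t ∈ (buildF π).1.δ, t.1 < (buildF π).2 ∧ t.2.1 < (buildF π).2 :=
      fun t ht => ⟨(hδ1 t ht).1, (hδ1 t ht).2.1⟩
    have h2' : ∀ t ∈ (SNFA.shift (buildF π).2 (buildF φ).1).δ,
        (buildF π).2 ≤ t.1 ∧ (buildF π).2 ≤ t.2.1 ∧
          t.2.1 ≠ (SNFA.shift (buildF π).2 (buildF φ).1).s := fun t ht =>
      ⟨(hδl t ht).1, (hδl t ht).2, (hδ2 t ht).2.2⟩
    have hM2lang : (SNFA.shift (buildF π).2 (buildF φ).1).lang = φ.lang := by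
      rw [← ih2]
      ext w
      exact acceptsFrom_shift
    ext w
    simp only [buildF, SNFA.lang, Set.mem_setOf_eq, SPC.lang]
    constructor
    · intro h
      obtain ⟨x, σ, y, r, rfl, hx, hr, hy⟩ := comp_left h1' hf1 hfl h2' _ hs1 h
      refine ⟨x, ?_, σ :: y, ?_, rfl⟩
      · rw [← ih1]; exact hx
      · rw [← hM2lang]; exact ⟨r, hr, hy⟩
    · rintro ⟨x, hx, y, hy, rfl⟩
      have hyne : y ≠ [] := spc_lang_ne φ y hy
      rw [← ih1] at hx
      rw [← hM2lang] at hy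
      match y, hyne, hy with
      | σ :: y', _, ⟨r, hr, hrest⟩ =>
        have hrfacts := h2' _ hr
        have a1 := acceptsFrom_mono (δ' := (buildF π).1.δ ∪
            {t ∈ (SNFA.shift (buildF π).2 (buildF φ).1).δ |
              t.1 ≠ (SNFA.shift (buildF π).2 (buildF φ).1).s} ∪
            (fun t => ((buildF π).1.f, t.2.1, t.2.2)) ''
              {t ∈ (SNFA.shift (buildF π).2 (buildF φ).1).δ |
                t.1 = (SNFA.shift (buildF π).2 (buildF φ).1).s})
          (fun t ht => Or.inl (Or.inl ht)) hx
        have a2 := (comp_right (fun t ht => (h1' t ht).1) hf1 h2' y' hrfacts.2.1 hrfacts.2.2).mpr hrest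
        exact acceptsFrom_append a1 ⟨r, Or.inr ⟨_, ⟨hr, rfl⟩, rfl⟩, a2⟩
  | plus π ih =>
    obtain ⟨hs, hf, hsf, hδ⟩ := binv_buildF π
    ext w
    simp only [buildF, SNFA.lang, Set.mem_setOf_eq, SPC.lang]
    constructor
    · intro h
      obtain ⟨x, l, rfl, hx, hl⟩ := plus_fwd _ h
      refine ⟨x :: l, by simp, ?_, by simp⟩
      intro z hz
      rcases List.mem_cons.mp hz with rfl | hz
      · rw [← ih]; exact hx
      · rw [← ih]; exact hl z hz
    · rintro ⟨l, hl, hall, rfl⟩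
      refine plus_bwd hsf l hl fun y hy => ⟨?_, spc_lang_ne π y (hall y hy)⟩
      have := hall y hy
      rw [← ih] at this
      exact this
end

section
/- Under the RPPM separation-of-duty policy, for any finite sequence of requests processed starting from the state with no allow-audit edges, and for any user u and constrained action a_j: the request (u, o, a_j) is allowed at the resulting state if and only if no request (u, o, a_i) with i ≠ j (1 ≤ i ≤ n) was allowed at any earlier point of the sequence. Equivalently, the state A reached after processing any sequence of requests satisfies: (u, i) ∈ A iff request (u, o, a_i) was allowed at some point, and at most one index i per user u has (u, i) ∈ A. -/
namespace SoD

variable {U : Type} {n : ℕ}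

/-- The system state is a set `A ⊆ U × {1,…,n}` of allow-audit edges:
`(u, i) ∈ A` records that user `u` has been authorized to perform the
constrained action `a_i` on the object `o`. -/
abbrev State (U : Type) (n : ℕ) := Set (U × Fin n)

/-- Under the separation-of-duty policy (rules
`ρ' = {(r, none, p)} ∪ {(allow-audit(a_i), none, p_i)}` and
`ϱ' = {(p, o, ⋆, 1)} ∪ {(p_i, o, a_j, 0) : j ≠ i}` with `DenyOverride`),
the request `(u, a_j)` is allowed in state `A` iff no `p_i` with `i ≠ j`
is matched, i.e. iff there is no `i ≠ j` with `(u, i) ∈ A`. -/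
def allowed (A : State U n) (q : U × Fin n) : Prop :=
  ¬ ∃ i : Fin n, i ≠ q.2 ∧ (q.1, i) ∈ A

/-- Processing one request: if it is allowed, the corresponding allow-audit
edge is added; otherwise the state is unchanged. -/
def step (A : State U n) (q : U × Fin n) : State U n :=
  A ∪ {p | allowed A q ∧ p = q}

/-- Processing a finite sequence of requests from state `A`. -/
def process (A : State U n) : List (U × Fin n) → State U n
  | [] => A
  | q :: qs => process (step A q) qs

/-- `allowedAtSome A qs q`: while processing the sequence `qs` from state `A`,
the request `q` was (made and) allowed at some point. -/
def allowedAtSome (A : State U n) : List (U × Fin n) → (U × Fin n) → Prop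
  | [], _ => False
  | q' :: qs, q => (q' = q ∧ allowed A q) ∨ allowedAtSome (step A q') qs q

lemma mem_process (A : State U n) (qs : List (U × Fin n)) (q : U × Fin n) :
    q ∈ process A qs ↔ q ∈ A ∨ allowedAtSome A qs q := by
  induction qs generalizing A with
  | nil => simp [process, allowedAtSome]
  | cons q' qs ih =>
    simp only [process, allowedAtSome, ih, step, Set.mem_union, Set.mem_setOf_eq]
    constructor
    · rintro (((h | ⟨ha, rfl⟩) | h))
      · exact Or.inl h
      · exact Or.inr (Or.inl ⟨rfl, ha⟩)
      · exact Or.inr (Or.inr h)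
    · rintro (h | ⟨rfl, ha⟩ | h)
      · exact Or.inl (Or.inl h)
      · exact Or.inl (Or.inr ⟨ha, rfl⟩)
      · exact Or.inr h

lemma uniq_process (A : State U n) (qs : List (U × Fin n))
    (hA : ∀ (u : U) (i i' : Fin n), (u, i) ∈ A → (u, i') ∈ A → i = i') :
    ∀ (u : U) (i i' : Fin n),
      (u, i) ∈ process A qs → (u, i') ∈ process A qs → i = i' := by
  induction qs generalizing A with
  | nil => exact hA
  | cons q qs ih =>
    refine ih (step A q) ?_
    intro u i i' hi hi'
    rcases hi with hi | ⟨ha, hq⟩ <;> rcases hi' with hi' | ⟨ha', hq'⟩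
    · exact hA u i i' hi hi'
    · -- (u,i)∈A, (u,i') = q, allowed A q
      cases hq'
      by_contra hne
      exact ha' ⟨i, hne, hi⟩
    · cases hq
      by_contra hne
      exact ha ⟨i', Ne.symm hne, hi'⟩
    · cases hq; cases hq'; rfl

end SoD

/-- starting from the state with no allow-audit edges, after
processing any finite sequence of requests:
* the request `(u, o, a_j)` is allowed at the resulting state iff no request
  `(u, o, a_i)` with `i ≠ j` was allowed at any earlier point;
* `(u, i)` is an allow-audit edge of the resulting state iff the request
  `(u, o, a_i)` was allowed at some point; and
* for each user `u`, at most one index `i` has `(u, i)` in the resulting state. -/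
theorem separation_of_duty (U : Type) (n : ℕ) (hn : 1 ≤ n)
    (qs : List (U × Fin n)) :
    (∀ (u : U) (j : Fin n),
        SoD.allowed (SoD.process (∅ : SoD.State U n) qs) (u, j) ↔
          ¬ ∃ i : Fin n, i ≠ j ∧ SoD.allowedAtSome (∅ : SoD.State U n) qs (u, i)) ∧
    (∀ (u : U) (i : Fin n),
        (u, i) ∈ SoD.process (∅ : SoD.State U n) qs ↔
          SoD.allowedAtSome (∅ : SoD.State U n) qs (u, i)) ∧
    (∀ (u : U) (i i' : Fin n),
        (u, i) ∈ SoD.process (∅ : SoD.State U n) qs →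
        (u, i') ∈ SoD.process (∅ : SoD.State U n) qs → i = i') := by
  have hmem : ∀ (u : U) (i : Fin n),
      (u, i) ∈ SoD.process (∅ : SoD.State U n) qs ↔
        SoD.allowedAtSome (∅ : SoD.State U n) qs (u, i) := by
    intro u i
    rw [SoD.mem_process]
    simp
  refine ⟨?_, hmem, SoD.uniq_process _ _ (by simp)⟩
  intro u j
  unfold SoD.allowed
  simp only [hmem]
end
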